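/- The Ledrappier subshift X is right-closing in the left direction (−1,0): the half-plane {(a,b) ∈ ℤ² : a > 0} together with the column {(0,b) : b < 0} codes the column {(0,b) : b ∈ ℤ}. Concretely, if x, y ∈ X agree on {(a,b) : a ≥ 1} ∪ {(0,b) : b < 0}, then x = y on {(a,b) : a ≥ 0}. -/
import Mathlib


def Ledrappier : Set ((ℤ × ℤ) → ZMod 2) :=
  {x | ∀ v : ℤ × ℤ, x v + x (v + (1, 0)) + x (v + (0, 1)) = 0}

/-- The Ledrappier subshift is right-closing in the left direction: if two configurations
agree on `{(a,b) : a ≥ 1} ∪ {(0,b) : b < 0}` then they agree on `{(a,b) : a ≥ 0}`. -/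
theorem ledrappier_right_closing_left :
    ∀ x ∈ Ledrappier, ∀ y ∈ Ledrappier,
      (∀ p : ℤ × ℤ, (1 ≤ p.1 ∨ (p.1 = 0 ∧ p.2 < 0)) → x p = y p) →
      ∀ p : ℤ × ℤ, 0 ≤ p.1 → x p = y p := by
  intro x hx y hy hagree p hp
  rcases p with ⟨a, b⟩
  simp only at hp
  rcases lt_or_eq_of_le hp with h1 | h0
  · exact hagree (a, b) (Or.inl h1)
  · subst h0
    -- prove column agreement by induction on b, starting at b = -1
    have key : ∀ k : ℕ, x (0, -1 + (k : ℤ)) = y (0, -1 + (k : ℤ)) := by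
      intro k
      induction k with
      | zero => exact hagree (0, -1 + (0:ℕ)) (Or.inr ⟨rfl, by norm_num⟩)
      | succ m ih =>
        set n : ℤ := -1 + (m : ℤ) with hndef
        have hcast : -1 + ((m + 1 : ℕ) : ℤ) = n + 1 := by push_cast; ring
        rw [hcast]
        have hxr := hx (0, n)
        have hyr := hy (0, n)
        simp only [Prod.mk_add_mk, zero_add, add_zero] at hxr hyr
        have h1 : x (1, n) = y (1, n) := hagree (1, n) (Or.inl le_rfl)
        have : x (0, n) + x (1, n) + x (0, n + 1)
            = y (0, n) + y (1, n) + y (0, n + 1) := hxr.trans hyr.symm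
        rw [ih, h1] at this
        exact add_left_cancel this
    rcases lt_or_ge b 0 with hb | hb
    · exact hagree (0, b) (Or.inr ⟨rfl, hb⟩)
    · have := key (b + 1).toNat
      rwa [show -1 + (((b+1).toNat : ℕ) : ℤ) = b by omega] at this
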